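/- Let μ be a τ-invariant probability measure for a measurable map τ on a space X, and let g ∈ L²(X, μ) with ∫ g dμ = 0 and Σ_{n≥1} (n+1)|∫ g·(g∘τ^n) dμ| < ∞. Then the limit Σ² := lim_{n→∞} (1/n) Var_μ(Σ_{j=0}^{n-1} g∘τ^j) exists and equals ∫ g² dμ + 2 Σ_{n=1}^∞ ∫ g·(g∘τ^n) dμ. -/

import Mathlib

open MeasureTheory Filter

/-- If `μ` is `τ`-invariant, `g ∈ L²(μ)` is centered and
`Σ_{n≥1} (n+1)|∫ g (g∘τ^n) dμ| < ∞`, then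
`Σ² = lim (1/n) Var_μ(Σ_{j<n} g∘τ^j)` exists and equals
`∫ g² dμ + 2 Σ_{n≥1} ∫ g (g∘τ^n) dμ`. -/
theorem stmt19 {X : Type*} [MeasurableSpace X] (μ : Measure X) [IsProbabilityMeasure μ]
    (τ : X → X) (hτ : MeasurePreserving τ μ μ)
    (g : X → ℝ) (hg : MemLp g 2 μ) (hcent : ∫ x, g x ∂μ = 0)
    (hsum : Summable fun n : ℕ => ((n : ℝ) + 2) * |∫ x, g x * g (τ^[n + 1] x) ∂μ|) :
    Tendsto
      (fun n : ℕ => (1 / (n : ℝ)) * ∫ x, (∑ j ∈ Finset.range n, g (τ^[j] x)) ^ 2 ∂μ)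
      atTop
      (nhds ((∫ x, g x ^ 2 ∂μ) + 2 * ∑' n : ℕ, ∫ x, g x * g (τ^[n + 1] x) ∂μ)) := by
  set c : ℕ → ℝ := fun k => ∫ x, g x * g (τ^[k] x) ∂μ with hc
  -- L² regularity of iterates
  have hgj : ∀ j : ℕ, MemLp (fun x => g (τ^[j] x)) 2 μ := fun j =>
    hg.comp_measurePreserving (hτ.iterate j)
  have hint : ∀ j l : ℕ, Integrable (fun x => g (τ^[j] x) * g (τ^[l] x)) μ := by
    intro j l
    have := ((hgj l).smul (hgj j) (r := 1) (hpqr := ⟨by rw [inv_one, ENNReal.inv_two_add_inv_two]⟩) : MemLp ((fun x => g (τ^[j] x)) • (fun x => g (τ^[l] x))) 1 μ)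
    rw [memLp_one_iff_integrable] at this
    exact this
  -- shift invariance
  have key : ∀ j k : ℕ, ∫ x, g (τ^[j] x) * g (τ^[j + k] x) ∂μ = c k := by
    intro j k
    have hmp := hτ.iterate j
    have hm : AEStronglyMeasurable (fun y => g y * g (τ^[k] y)) μ := by
      have := (hint 0 k).aestronglyMeasurable
      simpa using this
    calc ∫ x, g (τ^[j] x) * g (τ^[j + k] x) ∂μ
        = ∫ x, (fun y => g y * g (τ^[k] y)) (τ^[j] x) ∂μ := by
          congr 1; ext x
          rw [add_comm j k, Function.iterate_add_apply]
      _ = ∫ y, g y * g (τ^[k] y) ∂(Measure.map (τ^[j]) μ) :=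
          (integral_map hmp.aemeasurable (by rw [hmp.map_eq]; exact hm)).symm
      _ = c k := by rw [hmp.map_eq]
  -- expansion of the square
  have expand : ∀ n : ℕ, ∫ x, (∑ j ∈ Finset.range n, g (τ^[j] x)) ^ 2 ∂μ
      = ∑ m ∈ Finset.range n, (c 0 + 2 * ∑ k ∈ Finset.range m, c (k + 1)) := by
    intro n
    have sq : ∫ x, (∑ j ∈ Finset.range n, g (τ^[j] x)) ^ 2 ∂μ
        = ∑ j ∈ Finset.range n, ∑ l ∈ Finset.range n, ∫ x, g (τ^[j] x) * g (τ^[l] x) ∂μ := by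
      have : ∀ x, (∑ j ∈ Finset.range n, g (τ^[j] x)) ^ 2
          = ∑ j ∈ Finset.range n, ∑ l ∈ Finset.range n, g (τ^[j] x) * g (τ^[l] x) := by
        intro x; rw [sq, Finset.sum_mul_sum]
      simp_rw [this]
      rw [integral_finset_sum _ (fun j _ => integrable_finset_sum _ (fun l _ => hint j l))]
      exact Finset.sum_congr rfl fun j _ =>
        integral_finset_sum _ (fun l _ => hint j l)
    rw [sq]
    clear sq
    induction n with
    | zero => simp
    | succ n ih =>
      rw [Finset.sum_range_succ]
      rw [Finset.sum_range_succ]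
      have hrow : ∀ m ∈ Finset.range n,
          (∑ l ∈ Finset.range (n + 1), ∫ x, g (τ^[m] x) * g (τ^[l] x) ∂μ)
          = (∑ l ∈ Finset.range n, ∫ x, g (τ^[m] x) * g (τ^[l] x) ∂μ)
            + ∫ x, g (τ^[m] x) * g (τ^[n] x) ∂μ := fun m _ => Finset.sum_range_succ _ n
      rw [Finset.sum_congr rfl hrow, Finset.sum_add_distrib, ih]
      have h1 : ∑ l ∈ Finset.range n, ∫ x, g (τ^[n] x) * g (τ^[l] x) ∂μ
          = ∑ k ∈ Finset.range n, c (k + 1) := by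
        have : ∀ l ∈ Finset.range n, ∫ x, g (τ^[n] x) * g (τ^[l] x) ∂μ = c (n - l) := by
          intro l hl
          have hl' : l < n := Finset.mem_range.mp hl
          have := key l (n - l)
          rw [Nat.add_sub_cancel' hl'.le] at this
          rw [← this]
          congr 1; ext x; ring
        rw [Finset.sum_congr rfl this]
        rw [← Finset.sum_range_reflect (fun k => c (k + 1)) n]
        refine Finset.sum_congr rfl fun l hl => ?_
        have hl' : l < n := Finset.mem_range.mp hl
        congr 1
        omega
      have h2 : ∑ m ∈ Finset.range n, ∫ x, g (τ^[m] x) * g (τ^[n] x) ∂μ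
          = ∑ k ∈ Finset.range n, c (k + 1) := by
        rw [← h1]
        refine Finset.sum_congr rfl fun m _ => ?_
        congr 1; ext x; ring
      have h3 : ∫ x, g (τ^[n] x) * g (τ^[n] x) ∂μ = c 0 := by
        have := key n 0
        simpa using this
      rw [h1, h2, h3, Finset.sum_range_succ _ n]
      ring
  -- summability
  have hsummable : Summable fun k : ℕ => c (k + 1) := by
    apply Summable.of_abs
    refine Summable.of_nonneg_of_le (fun k => abs_nonneg _) (fun k => ?_) hsum
    have hk : (0 : ℝ) ≤ (k : ℝ) := Nat.cast_nonneg k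
    have h1 : (1 : ℝ) ≤ (k : ℝ) + 2 := by linarith
    nlinarith [abs_nonneg (c (k + 1))]
  -- the partial sums converge
  have hW : Tendsto (fun m : ℕ => c 0 + 2 * ∑ k ∈ Finset.range m, c (k + 1)) atTop
      (nhds (c 0 + 2 * ∑' k : ℕ, c (k + 1))) := by
    exact tendsto_const_nhds.add ((hsummable.hasSum.tendsto_sum_nat).const_mul 2)
  have hces := hW.cesaro
  have hc0 : c 0 = ∫ x, g x ^ 2 ∂μ := by
    simp only [hc, Function.iterate_zero, id_eq]
    congr 1; ext x; ring
  have heq : (fun n : ℕ => (1 / (n : ℝ)) * ∫ x, (∑ j ∈ Finset.range n, g (τ^[j] x)) ^ 2 ∂μ)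
      = fun n : ℕ => ((n : ℝ))⁻¹ * ∑ m ∈ Finset.range n, (c 0 + 2 * ∑ k ∈ Finset.range m, c (k + 1)) := by
    funext n; rw [expand n, one_div]
  have hfinal : (∫ x, g x ^ 2 ∂μ) + 2 * ∑' n : ℕ, ∫ x, g x * g (τ^[n + 1] x) ∂μ
      = c 0 + 2 * ∑' k : ℕ, c (k + 1) := by
    rw [hc0]
  rw [heq, hfinal]
  exact hces
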